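/- Error representation for the multishift approximation: Let A be an n×n Hermitian complex matrix, let σ_1, …, σ_p be real numbers none of which is an eigenvalue of A, let ω_1, …, ω_p ∈ ℝ, let c ∈ ℂ^n, and let v be a unit vector. Suppose x^{(1)}, …, x^{(p)} ∈ ℂ^n are vectors whose residuals are collinear with v: c − (A − σ_i I) x^{(i)} = ρ_i v with ρ_i ∈ ℝ for i = 1, …, p. Define x_* = ∑_{i=1}^p ω_i (A − σ_i I)^{-1} c and x = ∑_{i=1}^p ω_i x^{(i)}. Then x_* − x = ∑_{i=1}^p ρ_i ω_i (A − σ_i I)^{-1} v = g(A) v where g(t) = ∑_{i=1}^p ρ_i ω_i/(t − σ_i), and consequently ‖x_* − x‖² = v* g(A)² v. -/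

import Mathlib

open Matrix

/-- The Euclidean norm of a complex vector. -/
noncomputable def enormC {n : ℕ} (c : Fin n → ℂ) : ℝ :=
  Real.sqrt (Complex.re (star c ⬝ᵥ c))

section Helpers

variable {n : ℕ} {A : Matrix (Fin n) (Fin n) ℂ} (hA : A.IsHermitian)

lemma mycfc_congr {f g : ℝ → ℝ} (h : ∀ j, f (hA.eigenvalues j) = g (hA.eigenvalues j)) :
    hA.cfc f = hA.cfc g := by
  rw [Matrix.IsHermitian.cfc, Matrix.IsHermitian.cfc]
  have : (RCLike.ofReal ∘ f ∘ hA.eigenvalues : Fin n → ℂ)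
      = (RCLike.ofReal ∘ g ∘ hA.eigenvalues : Fin n → ℂ) := by
    funext j; simp [h j]
  rw [this]

lemma mycfc_mul (f g : ℝ → ℝ) :
    hA.cfc (fun t => f t * g t) = hA.cfc f * hA.cfc g := by
  rw [Matrix.IsHermitian.cfc, Matrix.IsHermitian.cfc, Matrix.IsHermitian.cfc]
  simp only [Unitary.conjStarAlgAut_apply]
  have h1 : (star (hA.eigenvectorUnitary : Matrix (Fin n) (Fin n) ℂ)) *
      (hA.eigenvectorUnitary : Matrix (Fin n) (Fin n) ℂ) = 1 :=
    Unitary.coe_star_mul_self _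
  have key : ∀ a b c d e f : Matrix (Fin n) (Fin n) ℂ,
      (a * b * c) * (d * e * f) = a * (b * (c * d) * e) * f := by
    intros; simp only [mul_assoc]
  rw [key, h1, mul_one, diagonal_mul_diagonal]
  have : (RCLike.ofReal ∘ (fun t => f t * g t) ∘ hA.eigenvalues : Fin n → ℂ)
      = fun i => (RCLike.ofReal ∘ f ∘ hA.eigenvalues) i *
          (RCLike.ofReal ∘ g ∘ hA.eigenvalues) i := by
    funext j; simp
  rw [this]

lemma mycfc_one : hA.cfc (fun _ => 1) = 1 := by
  rw [Matrix.IsHermitian.cfc]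
  simp only [Unitary.conjStarAlgAut_apply]
  have : (diagonal (RCLike.ofReal ∘ (fun _ : ℝ => (1:ℝ)) ∘ hA.eigenvalues) :
      Matrix (Fin n) (Fin n) ℂ) = 1 := by
    simp [Function.comp_def]
  rw [this, mul_one]
  exact Unitary.coe_mul_star_self _

lemma mycfc_sum {p : ℕ} (f : Fin p → ℝ → ℝ) :
    hA.cfc (fun t => ∑ i, f i t) = ∑ i, hA.cfc (f i) := by
  simp only [Matrix.IsHermitian.cfc, Unitary.conjStarAlgAut_apply]
  rw [← Finset.sum_mul, ← Finset.mul_sum]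
  have : (diagonal (RCLike.ofReal ∘ (fun t => ∑ i, f i t) ∘ hA.eigenvalues) :
      Matrix (Fin n) (Fin n) ℂ)
      = ∑ i, diagonal (RCLike.ofReal ∘ f i ∘ hA.eigenvalues) := by
    have h2 := map_sum (Matrix.diagonalAddMonoidHom (Fin n) ℂ)
      (fun i => (RCLike.ofReal ∘ f i ∘ hA.eigenvalues : Fin n → ℂ)) Finset.univ
    simp only [Matrix.diagonalAddMonoidHom_apply] at h2
    rw [← h2]
    have h3 : (RCLike.ofReal ∘ (fun t => ∑ i, f i t) ∘ hA.eigenvalues : Fin n → ℂ)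
        = ∑ i : Fin p, (RCLike.ofReal ∘ f i ∘ hA.eigenvalues : Fin n → ℂ) := by
      funext j; simp
    rw [h3]
  rw [this]

lemma mycfc_smul (r : ℝ) (f : ℝ → ℝ) :
    hA.cfc (fun t => r * f t) = (r : ℂ) • hA.cfc f := by
  simp only [Matrix.IsHermitian.cfc, Unitary.conjStarAlgAut_apply]
  have : (diagonal (RCLike.ofReal ∘ (fun t => r * f t) ∘ hA.eigenvalues) :
      Matrix (Fin n) (Fin n) ℂ)
      = (r : ℂ) • diagonal (RCLike.ofReal ∘ f ∘ hA.eigenvalues) := by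
    rw [← diagonal_smul]
    have h3 : (RCLike.ofReal ∘ (fun t => r * f t) ∘ hA.eigenvalues : Fin n → ℂ)
        = (r : ℂ) • (RCLike.ofReal ∘ f ∘ hA.eigenvalues : Fin n → ℂ) := by
      funext j; simp
    rw [h3]
  rw [this, mul_smul_comm, smul_mul_assoc]

lemma mycfc_sub_id (σ : ℝ) : hA.cfc (fun t => t - σ) = A - (σ : ℂ) • 1 := by
  simp only [Matrix.IsHermitian.cfc, Unitary.conjStarAlgAut_apply]
  have h1 : (diagonal (RCLike.ofReal ∘ (fun t : ℝ => t - σ) ∘ hA.eigenvalues) :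
      Matrix (Fin n) (Fin n) ℂ)
      = diagonal (RCLike.ofReal ∘ hA.eigenvalues) - (σ : ℂ) • 1 := by
    rw [← Matrix.diagonal_one, ← diagonal_smul]
    have h3 : (RCLike.ofReal ∘ (fun t : ℝ => t - σ) ∘ hA.eigenvalues : Fin n → ℂ)
        = fun j => (RCLike.ofReal ∘ hA.eigenvalues : Fin n → ℂ) j
            - ((σ:ℂ) • fun _ : Fin n => (1:ℂ)) j := by
      funext j; simp
    rw [h3, diagonal_sub]
  rw [h1, mul_sub, sub_mul]
  congr 1
  · exact hA.spectral_theorem.symm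
  · rw [mul_smul_comm, smul_mul_assoc, mul_one]
    congr 1
    exact Unitary.coe_mul_star_self _

lemma mycfc_herm (f : ℝ → ℝ) : (hA.cfc f).conjTranspose = hA.cfc f := by
  rw [← star_eq_conjTranspose, Matrix.IsHermitian.cfc]
  simp only [Unitary.conjStarAlgAut_apply]
  simp only [StarMul.star_mul, star_star, mul_assoc]
  congr 1
  have : star (diagonal (RCLike.ofReal ∘ f ∘ hA.eigenvalues) : Matrix (Fin n) (Fin n) ℂ)
      = diagonal (RCLike.ofReal ∘ f ∘ hA.eigenvalues) := by
    rw [star_eq_conjTranspose, diagonal_conjTranspose]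
    have h3 : (star (RCLike.ofReal ∘ f ∘ hA.eigenvalues) : Fin n → ℂ)
        = (RCLike.ofReal ∘ f ∘ hA.eigenvalues : Fin n → ℂ) := by
      funext j; simp [Pi.star_def]
    rw [h3]
  rw [this]

lemma mycfc_inv (σ : ℝ) (hσ : ∀ j, hA.eigenvalues j ≠ σ) :
    (A - (σ : ℂ) • 1)⁻¹ = hA.cfc (fun t => (t - σ)⁻¹) ∧
    hA.cfc (fun t => (t - σ)⁻¹) * (A - (σ : ℂ) • 1) = 1 := by
  have hright : (A - (σ : ℂ) • 1) * hA.cfc (fun t => (t - σ)⁻¹) = 1 := by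
    rw [← mycfc_sub_id hA σ, ← mycfc_mul]
    rw [mycfc_congr hA (g := fun _ => 1) fun j => by
      field_simp [sub_ne_zero.mpr (hσ j)]]
    exact mycfc_one hA
  have hleft : hA.cfc (fun t => (t - σ)⁻¹) * (A - (σ : ℂ) • 1) = 1 := by
    rw [← mycfc_sub_id hA σ, ← mycfc_mul]
    rw [mycfc_congr hA (g := fun _ => 1) fun j => by
      field_simp [sub_ne_zero.mpr (hσ j)]]
    exact mycfc_one hA
  exact ⟨Matrix.inv_eq_right_inv hright, hleft⟩

end Helpers

/-- **Error representation for the multishift approximation**: if the residuals of the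
iterates `x⁽ⁱ⁾` for the shifted systems `(A - σᵢ I) x = c` are all collinear with the unit
vector `v`, `c - (A - σᵢ I) x⁽ⁱ⁾ = ρᵢ v`, then the error of `x = ∑ᵢ ωᵢ x⁽ⁱ⁾` with respect to
`x_* = ∑ᵢ ωᵢ (A - σᵢ I)⁻¹ c` is `x_* - x = ∑ᵢ ρᵢ ωᵢ (A - σᵢ I)⁻¹ v = g(A) v` where
`g(t) = ∑ᵢ ρᵢ ωᵢ/(t - σᵢ)`, and hence `‖x_* - x‖² = v* g(A)² v`. -/
theorem multishift_error_representation
    {n p : ℕ} {A : Matrix (Fin n) (Fin n) ℂ} (hA : A.IsHermitian)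
    (σ : Fin p → ℝ) (hσ : ∀ i j, hA.eigenvalues j ≠ σ i)
    (ω : Fin p → ℝ) (c : Fin n → ℂ)
    {v : Fin n → ℂ} (hv : star v ⬝ᵥ v = 1)
    (x : Fin p → (Fin n → ℂ)) (ρ : Fin p → ℝ)
    (hres : ∀ i, c - (A - (σ i : ℂ) • 1) *ᵥ x i = ((ρ i : ℝ) : ℂ) • v)
    (xstar xapp : Fin n → ℂ)
    (hxstar : xstar = ∑ i, ((ω i : ℝ) : ℂ) • ((A - (σ i : ℂ) • 1)⁻¹ *ᵥ c))
    (hxapp : xapp = ∑ i, ((ω i : ℝ) : ℂ) • x i) :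
    xstar - xapp = ∑ i, ((ρ i * ω i : ℝ) : ℂ) • ((A - (σ i : ℂ) • 1)⁻¹ *ᵥ v) ∧
    xstar - xapp = (hA.cfc fun t => ∑ i, ρ i * ω i / (t - σ i)) *ᵥ v ∧
    enormC (xstar - xapp) ^ 2
      = Complex.re (star v ⬝ᵥ (hA.cfc fun t => (∑ i, ρ i * ω i / (t - σ i)) ^ 2) *ᵥ v) := by
  have hinv := fun i => (mycfc_inv hA (σ i) (fun j => hσ i j)).1
  have hleft := fun i => (mycfc_inv hA (σ i) (fun j => hσ i j)).2
  -- Claim 1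
  have claim1 : xstar - xapp
      = ∑ i, ((ρ i * ω i : ℝ) : ℂ) • ((A - (σ i : ℂ) • 1)⁻¹ *ᵥ v) := by
    rw [hxstar, hxapp, ← Finset.sum_sub_distrib]
    refine Finset.sum_congr rfl fun i _ => ?_
    have hc : c = ((ρ i : ℝ) : ℂ) • v + (A - (σ i : ℂ) • 1) *ᵥ x i :=
      sub_eq_iff_eq_add.mp (hres i)
    have hMc : (A - (σ i : ℂ) • 1)⁻¹ *ᵥ c
        = ((ρ i : ℝ) : ℂ) • ((A - (σ i : ℂ) • 1)⁻¹ *ᵥ v) + x i := by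
      rw [hc, mulVec_add, mulVec_smul, mulVec_mulVec, hinv i, hleft i, one_mulVec]
    rw [hMc, smul_add, add_sub_cancel_right, smul_smul, Complex.ofReal_mul, mul_comm]
  -- decomposition of g(A)
  have hg : hA.cfc (fun t => ∑ i, ρ i * ω i / (t - σ i))
      = ∑ i, ((ρ i * ω i : ℝ) : ℂ) • hA.cfc (fun t => (t - σ i)⁻¹) := by
    rw [mycfc_sum hA (fun i t => ρ i * ω i / (t - σ i))]
    refine Finset.sum_congr rfl fun i _ => ?_
    rw [show (fun t => ρ i * ω i / (t - σ i)) = fun t => (ρ i * ω i) * (t - σ i)⁻¹ from by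
      funext t; rw [div_eq_mul_inv], mycfc_smul]
  have sum_mulVec : ∀ (M : Fin p → Matrix (Fin n) (Fin n) ℂ) (w : Fin n → ℂ),
      (∑ i, M i) *ᵥ w = ∑ i, M i *ᵥ w := by
    intro M w
    exact map_sum (AddMonoidHom.mk' (fun N : Matrix (Fin n) (Fin n) ℂ => N *ᵥ w)
      (fun N₁ N₂ => add_mulVec N₁ N₂ w)) M Finset.univ
  have claim2 : xstar - xapp = (hA.cfc fun t => ∑ i, ρ i * ω i / (t - σ i)) *ᵥ v := by
    rw [claim1, hg, sum_mulVec]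
    refine Finset.sum_congr rfl fun i _ => ?_
    rw [hinv i, Matrix.smul_mulVec]
  refine ⟨claim1, claim2, ?_⟩
  -- Claim 3
  set G := hA.cfc (fun t => ∑ i, ρ i * ω i / (t - σ i)) with hG
  have hsq : G * G = hA.cfc fun t => (∑ i, ρ i * ω i / (t - σ i)) ^ 2 := by
    rw [← mycfc_mul]
    exact mycfc_congr hA fun j => (sq _).symm
  have hdot : star (xstar - xapp) ⬝ᵥ (xstar - xapp)
      = star v ⬝ᵥ (hA.cfc fun t => (∑ i, ρ i * ω i / (t - σ i)) ^ 2) *ᵥ v := by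
    rw [claim2, star_mulVec, dotProduct_mulVec, vecMul_vecMul, mycfc_herm, ← hG, hsq,
      ← dotProduct_mulVec]
  have hnonneg : 0 ≤ Complex.re (star (xstar - xapp) ⬝ᵥ (xstar - xapp)) := by
    rw [dotProduct, Complex.re_sum]
    refine Finset.sum_nonneg fun j _ => ?_
    simp only [Pi.star_apply, Complex.star_def]
    rw [← Complex.normSq_eq_conj_mul_self, Complex.ofReal_re]
    exact Complex.normSq_nonneg _
  rw [enormC, Real.sq_sqrt hnonneg, hdot]
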